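/- For every integer k ≥ 1 one has |g_ρ(k)| = 1, and there exists ε > 0 such that |g_ρ(μ)| > 1 for all μ ∈ (k - ε, k) and |g_ρ(μ)| < 1 for all μ ∈ (k, k + ε). (Thus each positive integer k is exactly a right gap edge μ⁺_k = k of the set {|g_ρ| ≤ 1}.) -/

import Mathlib

set_option maxHeartbeats 1000000


/-- with `g_ρ(μ) = cos(πμ) - ρμ sin(πμ)`, every positive integer `k`
satisfies `|g_ρ(k)| = 1` and is a right gap edge of `{|g_ρ| ≤ 1}`: for some `ε > 0`,
`|g_ρ| > 1` on `(k-ε, k)` and `|g_ρ| < 1` on `(k, k+ε)`. -/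
theorem stmt_10 (ρ : ℝ) (hρ : 0 < ρ)
    (g : ℝ → ℝ)
    (hg : ∀ μ : ℝ, g μ = Real.cos (Real.pi * μ) - ρ * μ * Real.sin (Real.pi * μ)) :
    ∀ k : ℕ, 1 ≤ k →
      |g (k : ℝ)| = 1 ∧
      ∃ ε > (0 : ℝ),
        (∀ μ ∈ Set.Ioo ((k : ℝ) - ε) (k : ℝ), 1 < |g μ|) ∧
        (∀ μ ∈ Set.Ioo (k : ℝ) ((k : ℝ) + ε), |g μ| < 1) := by
  intro k hk
  have hπ : 0 < Real.pi := Real.pi_pos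
  have hk1 : (1 : ℝ) ≤ (k : ℝ) := by exact_mod_cast hk
  -- reduction: |g μ| = |cos(π(μ-k)) - ρ μ sin(π(μ-k))|
  have hred : ∀ μ : ℝ,
      |g μ| = |Real.cos (Real.pi * (μ - k)) - ρ * μ * Real.sin (Real.pi * (μ - k))| := by
    intro μ
    have hrw : Real.pi * μ = Real.pi * (μ - k) + k * Real.pi := by ring
    have hc : Real.cos (Real.pi * μ) = (-1) ^ k * Real.cos (Real.pi * (μ - k)) := by
      rw [hrw, Real.cos_add_nat_mul_pi]
    have hs : Real.sin (Real.pi * μ) = (-1) ^ k * Real.sin (Real.pi * (μ - k)) := by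
      rw [hrw, Real.sin_add_nat_mul_pi]
    rw [hg μ, hc, hs,
      show (-1 : ℝ) ^ k * Real.cos (Real.pi * (μ - k)) -
          ρ * μ * ((-1) ^ k * Real.sin (Real.pi * (μ - k))) =
        (-1) ^ k * (Real.cos (Real.pi * (μ - k)) - ρ * μ * Real.sin (Real.pi * (μ - k)))
        by ring,
      abs_mul, abs_pow, abs_neg, abs_one, one_pow, one_mul]
  constructor
  · rw [hred]
    simp
  · set ε : ℝ := min (ρ / (4 * Real.pi)) (min (1 / Real.pi) (1 / (ρ * (k + 1) * Real.pi)))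
      with hε
    have hεpos : 0 < ε := by
      apply lt_min
      · positivity
      · exact lt_min (by positivity) (by positivity)
    have hε1 : ε ≤ ρ / (4 * Real.pi) := min_le_left _ _
    have hε2 : ε ≤ 1 / Real.pi := le_trans (min_le_right _ _) (min_le_left _ _)
    have hε3 : ε ≤ 1 / (ρ * (k + 1) * Real.pi) :=
      le_trans (min_le_right _ _) (min_le_right _ _)
    refine ⟨ε, hεpos, ?_, ?_⟩
    · -- left of k : |g| > 1
      intro μ ⟨h1, h2⟩
      rw [hred]
      set x : ℝ := Real.pi * ((k : ℝ) - μ) with hx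
      have hxpos : 0 < x := by
        have : (0 : ℝ) < (k : ℝ) - μ := by linarith
        positivity
      have hx1 : x ≤ 1 := by
        have hsε : (k : ℝ) - μ < ε := by linarith
        have : x < Real.pi * ε := by
          apply mul_lt_mul_of_pos_left hsε hπ
        have h2' : Real.pi * ε ≤ 1 := by
          rw [div_eq_mul_inv] at hε2
          calc Real.pi * ε ≤ Real.pi * (1 / Real.pi) := by
                exact mul_le_mul_of_nonneg_left hε2 hπ.le
            _ = 1 := by field_simp
        linarith
      have hxρ : x < 3 * ρ / 4 := by
        have hsε : (k : ℝ) - μ < ε := by linarith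
        have h1' : x < Real.pi * ε := mul_lt_mul_of_pos_left hsε hπ
        have h2' : Real.pi * ε ≤ ρ / 4 := by
          calc Real.pi * ε ≤ Real.pi * (ρ / (4 * Real.pi)) := by
                exact mul_le_mul_of_nonneg_left hε1 hπ.le
            _ = ρ / 4 := by field_simp
        linarith
      have hμhalf : (1 : ℝ) / 2 ≤ μ := by
        have : ε ≤ 1 / 2 := by
          have h3 : (2 : ℝ) ≤ Real.pi := by linarith [Real.pi_gt_three]
          calc ε ≤ 1 / Real.pi := hε2
            _ ≤ 1 / 2 := by
                apply div_le_div_of_nonneg_left (by norm_num) (by norm_num) h3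
        linarith
      have hμpos : 0 < μ := by linarith
      -- μ - k = -(k - μ), so cos(π(μ-k)) = cos x, sin(π(μ-k)) = -sin x
      have hcos : Real.cos (Real.pi * (μ - k)) = Real.cos x := by
        rw [hx, show Real.pi * (μ - k) = -(Real.pi * ((k:ℝ) - μ)) by ring, Real.cos_neg]
      have hsin : Real.sin (Real.pi * (μ - k)) = -Real.sin x := by
        rw [hx, show Real.pi * (μ - k) = -(Real.pi * ((k:ℝ) - μ)) by ring, Real.sin_neg]
      rw [hcos, hsin]
      have hsinlb : x - x ^ 3 / 4 < Real.sin x := by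
        have := Real.sin_gt_sub_cube hxpos
        linarith [pow_pos hxpos 3]
      have hcoslb : 1 - x ^ 2 / 2 ≤ Real.cos x := Real.one_sub_sq_div_two_le_cos
      have key : 1 < Real.cos x + ρ * μ * Real.sin x := by
        have hρμ : ρ / 2 ≤ ρ * μ := by nlinarith
        have hA : ρ * μ * (x - x ^ 3 / 4) < ρ * μ * Real.sin x :=
          mul_lt_mul_of_pos_left hsinlb (by positivity)
        have hcube : 3 * x / 4 ≤ x - x ^ 3 / 4 := by nlinarith
        have hB : (ρ / 2) * (3 * x / 4) ≤ ρ * μ * (x - x ^ 3 / 4) := by nlinarith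
        have hD : x ^ 2 / 2 < (ρ / 2) * (3 * x / 4) := by nlinarith
        linarith
      calc (1 : ℝ) < Real.cos x + ρ * μ * Real.sin x := key
        _ ≤ |Real.cos x - ρ * μ * -Real.sin x| := by
            rw [show Real.cos x - ρ * μ * -Real.sin x
              = Real.cos x + ρ * μ * Real.sin x by ring]
            exact le_abs_self _
    · -- right of k : |g| < 1
      intro μ ⟨h1, h2⟩
      rw [hred]
      set x : ℝ := Real.pi * (μ - k) with hx
      have hxpos : 0 < x := by
        have : (0 : ℝ) < μ - (k : ℝ) := by linarith
        positivity
      have hx1 : x < 1 := by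
        have hsε : μ - (k : ℝ) < ε := by linarith
        have h1' : x < Real.pi * ε := mul_lt_mul_of_pos_left hsε hπ
        have h2' : Real.pi * ε ≤ 1 := by
          rw [div_eq_mul_inv] at hε2
          calc Real.pi * ε ≤ Real.pi * (1 / Real.pi) :=
                mul_le_mul_of_nonneg_left hε2 hπ.le
            _ = 1 := by field_simp
        linarith
      have hμpos : 0 < μ := by linarith
      have hsinpos : 0 < Real.sin x :=
        Real.sin_pos_of_pos_of_lt_pi hxpos (by linarith [Real.pi_gt_three])
      have hsinub : Real.sin x < x := Real.sin_lt hxpos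
      have hcoslb : 1 - x ^ 2 / 2 ≤ Real.cos x := Real.one_sub_sq_div_two_le_cos
      have hcosub : Real.cos x ≤ 1 := Real.cos_le_one x
      -- ρ μ sin x < 1
      have hbound : ρ * μ * Real.sin x < 1 := by
        have hμub : μ < (k : ℝ) + 1 := by
          have : ε ≤ 1 := by
            have h3 : (1 : ℝ) ≤ Real.pi := by linarith [Real.pi_gt_three]
            calc ε ≤ 1 / Real.pi := hε2
              _ ≤ 1 := by
                  rw [div_le_one hπ]; exact h3
          linarith
        have hxb : x < Real.pi * ε := by
          have hsε : μ - (k : ℝ) < ε := by linarith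
          exact mul_lt_mul_of_pos_left hsε hπ
        have hεb : Real.pi * ε ≤ 1 / (ρ * ((k : ℝ) + 1)) := by
          calc Real.pi * ε ≤ Real.pi * (1 / (ρ * (k + 1) * Real.pi)) :=
                mul_le_mul_of_nonneg_left hε3 hπ.le
            _ = 1 / (ρ * ((k : ℝ) + 1)) := by
                field_simp
        have hkpos : (0 : ℝ) < ρ * ((k : ℝ) + 1) := by positivity
        have hxlt : x < 1 / (ρ * ((k : ℝ) + 1)) := lt_of_lt_of_le hxb hεb
        calc ρ * μ * Real.sin x < ρ * ((k : ℝ) + 1) * x := by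
              have e1 : ρ * μ * Real.sin x < ρ * μ * x :=
                mul_lt_mul_of_pos_left hsinub (mul_pos hρ hμpos)
              have e2 : ρ * μ * x ≤ ρ * ((k : ℝ) + 1) * x :=
                mul_le_mul_of_nonneg_right
                  (mul_le_mul_of_nonneg_left hμub.le hρ.le) hxpos.le
              linarith
          _ < ρ * ((k : ℝ) + 1) * (1 / (ρ * ((k : ℝ) + 1))) :=
              mul_lt_mul_of_pos_left hxlt hkpos
          _ = 1 := by field_simp
      rw [abs_lt]
      constructor
      · nlinarith
      · nlinarith [mul_pos (mul_pos hρ hμpos) hsinpos]
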